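/- Let X be a d×d self-adjoint random matrix with 𝔼X = 0 and ‖X‖ ≤ 1 almost surely (operator norm). Then for every θ > 0, 𝔼 e^{θX} ⪯ I_d + φ(θ)·𝔼X², where φ(θ) = e^θ − θ − 1 and ⪯ is the Loewner order. -/

import Mathlib

open Matrix MeasureTheory NormedSpace
open scoped ComplexOrder
open scoped Nat

noncomputable def opNorm {d : ℕ} (A : Matrix (Fin d) (Fin d) ℂ) : ℝ :=
  ‖Matrix.toEuclideanCLM (𝕜 := ℂ) A‖


lemma exp_tail (t : ℝ) : Real.exp t = 1 + t + ∑' n : ℕ, t ^ (n + 2) / ((n + 2)! : ℝ) := by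
  have hs : Summable (fun n : ℕ => t ^ n / n !) := Real.summable_pow_div_factorial t
  have h0 : Real.exp t = ∑' n : ℕ, t ^ n / n ! := by
    rw [Real.exp_eq_exp_ℝ, exp_eq_tsum_div]
  rw [h0, Summable.tsum_eq_zero_add hs, Summable.tsum_eq_zero_add ((summable_nat_add_iff (f := fun n : ℕ => t ^ n / (n ! : ℝ)) 1).2 hs)]
  simp [Nat.factorial]
  ring

lemma scalar_ineq {θ x : ℝ} (hθ : 0 ≤ θ) (hx : |x| ≤ 1) :
    Real.exp (θ * x) ≤ 1 + θ * x + (Real.exp θ - θ - 1) * x ^ 2 := by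
  have haux : ∀ t : ℝ, Summable (fun n : ℕ => t ^ (n + 2) / ((n + 2)! : ℝ)) := by
    intro t
    exact (summable_nat_add_iff (f := fun n : ℕ => t ^ n / (n ! : ℝ)) 2).2
      (Real.summable_pow_div_factorial t)
  have hsθ := haux θ
  have hsx := haux (θ * x)
  have hc : Real.exp θ - θ - 1 = ∑' n : ℕ, θ ^ (n + 2) / ((n + 2)! : ℝ) := by
    rw [exp_tail θ]; ring
  rw [exp_tail (θ * x), hc, ← tsum_mul_right]
  have hterm : ∀ n : ℕ, (θ * x) ^ (n + 2) / ((n + 2)! : ℝ) ≤ θ ^ (n + 2) / ((n + 2)! : ℝ) * x ^ 2 := by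
    intro n
    have hxx : x ^ (n + 2) ≤ x ^ 2 := by
      calc x ^ (n + 2) ≤ |x ^ (n + 2)| := le_abs_self _
        _ = |x| ^ n * |x| ^ 2 := by rw [abs_pow]; ring
        _ ≤ 1 * |x| ^ 2 := by gcongr; exact pow_le_one₀ (abs_nonneg x) hx
        _ = x ^ 2 := by rw [one_mul, sq_abs]
    have h2 : (θ * x) ^ (n + 2) ≤ θ ^ (n + 2) * x ^ 2 := by
      rw [mul_pow]
      exact mul_le_mul_of_nonneg_left hxx (pow_nonneg hθ _)
    calc (θ * x) ^ (n + 2) / ((n + 2)! : ℝ) ≤ (θ ^ (n + 2) * x ^ 2) / ((n + 2)! : ℝ) := by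
          apply div_le_div_of_nonneg_right h2 ?_ |>.trans_eq rfl
          positivity
      _ = θ ^ (n + 2) / ((n + 2)! : ℝ) * x ^ 2 := by ring
  have := Summable.tsum_le_tsum hterm hsx (hsθ.mul_right (x ^ 2))
  linarith


lemma euclid_coord_le {d : ℕ} (w : EuclideanSpace ℂ (Fin d)) (i : Fin d) : ‖w i‖ ≤ ‖w‖ := by
  rw [EuclideanSpace.norm_eq]
  have h1 : ‖w i‖ = Real.sqrt (‖w i‖ ^ 2) := by
    rw [Real.sqrt_sq (norm_nonneg _)]
  rw [h1]
  apply Real.sqrt_le_sqrt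
  exact Finset.single_le_sum (f := fun k => ‖w k‖ ^ 2) (fun k _ => sq_nonneg _) (Finset.mem_univ i)

lemma entry_le_opNorm {d : ℕ} (A : Matrix (Fin d) (Fin d) ℂ) (i j : Fin d) :
    ‖A i j‖ ≤ opNorm A := by
  classical
  set v : EuclideanSpace ℂ (Fin d) := EuclideanSpace.single j 1 with hv
  have hnv : ‖v‖ = 1 := by simp [hv, EuclideanSpace.norm_single]
  have happ : toEuclideanCLM (𝕜 := ℂ) A v = (WithLp.equiv 2 _).symm (A *ᵥ Pi.single j 1) := by
    rfl
  have hAij : (toEuclideanCLM (𝕜 := ℂ) A v) i = A i j := by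
    rw [happ]
    show (A *ᵥ Pi.single j 1) i = A i j
    simp [mulVec_single]
  calc ‖A i j‖ = ‖(toEuclideanCLM (𝕜 := ℂ) A v) i‖ := by rw [hAij]
    _ ≤ ‖toEuclideanCLM (𝕜 := ℂ) A v‖ := euclid_coord_le _ i
    _ ≤ ‖toEuclideanCLM (𝕜 := ℂ) A‖ * ‖v‖ := (toEuclideanCLM (𝕜 := ℂ) A).le_opNorm v
    _ = opNorm A := by rw [hnv, mul_one, opNorm]

lemma opNorm_sq_le {d : ℕ} (A : Matrix (Fin d) (Fin d) ℂ) :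
    opNorm (A ^ 2) ≤ opNorm A ^ 2 := by
  rw [opNorm, opNorm, map_pow]
  exact norm_pow_le' _ two_pos

lemma eigen_abs_le {d : ℕ} {A : Matrix (Fin d) (Fin d) ℂ} (hA : A.IsHermitian) (i : Fin d) :
    |hA.eigenvalues i| ≤ opNorm A := by
  set v : EuclideanSpace ℂ (Fin d) := hA.eigenvectorBasis i with hv
  have hnv : ‖v‖ = 1 := hA.eigenvectorBasis.orthonormal.1 i
  have happ : toEuclideanCLM (𝕜 := ℂ) A v = hA.eigenvalues i • v := by
    have h0 : v = (WithLp.equiv 2 _).symm (WithLp.equiv 2 _ v) := (Equiv.symm_apply_apply _ _).symm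
    rw [h0]
    show (WithLp.equiv 2 _).symm (A *ᵥ (WithLp.equiv 2 _) v) = _
    have h1 : A *ᵥ (WithLp.equiv 2 _) v = hA.eigenvalues i • (WithLp.equiv 2 _) v :=
      hA.mulVec_eigenvectorBasis i
    rw [h1]
    rfl
  calc |hA.eigenvalues i| = |hA.eigenvalues i| * ‖v‖ := by rw [hnv, mul_one]
    _ = ‖hA.eigenvalues i • v‖ := by rw [norm_smul, Real.norm_eq_abs]
    _ = ‖toEuclideanCLM (𝕜 := ℂ) A v‖ := by rw [happ]
    _ ≤ ‖toEuclideanCLM (𝕜 := ℂ) A‖ * ‖v‖ := (toEuclideanCLM (𝕜 := ℂ) A).le_opNorm v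
    _ = opNorm A := by rw [hnv, mul_one, opNorm]

variable {d : ℕ}



lemma smul_spectral {A : Matrix (Fin d) (Fin d) ℂ} (hA : A.IsHermitian) (θ : ℝ) :
    θ • A = (hA.eigenvectorUnitary : Matrix (Fin d) (Fin d) ℂ) *
      diagonal (fun i => ((θ * hA.eigenvalues i : ℝ) : ℂ)) *
      star (hA.eigenvectorUnitary : Matrix (Fin d) (Fin d) ℂ) := by
  conv_lhs => rw [hA.spectral_theorem, Unitary.conjStarAlgAut_apply]
  have hdiag : θ • (diagonal (RCLike.ofReal ∘ hA.eigenvalues) : Matrix (Fin d) (Fin d) ℂ)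
      = diagonal (fun i => ((θ * hA.eigenvalues i : ℝ) : ℂ)) := by
    ext i j
    rcases eq_or_ne i j with h | h <;>
      simp [h, diagonal_apply, Complex.real_smul]
  rw [← smul_mul_assoc, ← mul_smul_comm, hdiag]

lemma exp_spectral {A : Matrix (Fin d) (Fin d) ℂ} (hA : A.IsHermitian) (θ : ℝ) :
    exp (θ • A) = (hA.eigenvectorUnitary : Matrix (Fin d) (Fin d) ℂ) *
      diagonal (fun i => ((Real.exp (θ * hA.eigenvalues i) : ℝ) : ℂ)) *
      star (hA.eigenvectorUnitary : Matrix (Fin d) (Fin d) ℂ) := by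
  set U : Matrix (Fin d) (Fin d) ℂ := (hA.eigenvectorUnitary : Matrix (Fin d) (Fin d) ℂ) with hU
  have hUunit : IsUnit U := ⟨Unitary.toUnits hA.eigenvectorUnitary, rfl⟩
  have hUinv : U⁻¹ = star U := inv_eq_left_inv (mem_unitaryGroup_iff'.mp hA.eigenvectorUnitary.2)
  rw [smul_spectral hA θ, ← hUinv, Matrix.exp_conj U _ hUunit, Matrix.exp_diagonal, hUinv]
  congr 2
  funext i
  rw [Pi.exp_def]
  simp [← Complex.exp_eq_exp_ℂ, Complex.ofReal_exp]

lemma sq_spectral {A : Matrix (Fin d) (Fin d) ℂ} (hA : A.IsHermitian) :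
    A ^ 2 = (hA.eigenvectorUnitary : Matrix (Fin d) (Fin d) ℂ) *
      diagonal (fun i => ((hA.eigenvalues i ^ 2 : ℝ) : ℂ)) *
      star (hA.eigenvectorUnitary : Matrix (Fin d) (Fin d) ℂ) := by
  have hUU' : star (hA.eigenvectorUnitary : Matrix (Fin d) (Fin d) ℂ) *
      (hA.eigenvectorUnitary : Matrix (Fin d) (Fin d) ℂ) = 1 :=
    mem_unitaryGroup_iff'.mp hA.eigenvectorUnitary.2
  have hcanc : ∀ X : Matrix (Fin d) (Fin d) ℂ,
      star (hA.eigenvectorUnitary : Matrix (Fin d) (Fin d) ℂ) *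
        ((hA.eigenvectorUnitary : Matrix (Fin d) (Fin d) ℂ) * X) = X := by
    intro X; rw [← mul_assoc, hUU', one_mul]
  rw [pow_two]
  conv_lhs => rw [hA.spectral_theorem, Unitary.conjStarAlgAut_apply]
  simp only [mul_assoc]
  rw [hcanc, ← mul_assoc (diagonal _) (diagonal _), diagonal_mul_diagonal]
  have hfun : (fun i => (RCLike.ofReal ∘ hA.eigenvalues) i * (RCLike.ofReal ∘ hA.eigenvalues) i)
      = (fun i => ((hA.eigenvalues i ^ 2 : ℝ) : ℂ)) := by
    funext i
    simp only [Function.comp_apply]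
    rw [← RCLike.ofReal_mul, ← pow_two]
    rfl
  rw [hfun, ← mul_assoc]

lemma combine_spectral (θ : ℝ) (A : Matrix (Fin d) (Fin d) ℂ) (hA : A.IsHermitian) :
    (1 : Matrix (Fin d) (Fin d) ℂ) + θ • A + (Real.exp θ - θ - 1) • A ^ 2 - exp (θ • A)
      = (hA.eigenvectorUnitary : Matrix (Fin d) (Fin d) ℂ) *
        diagonal (fun i => ((1 + θ * hA.eigenvalues i
            + (Real.exp θ - θ - 1) * hA.eigenvalues i ^ 2
            - Real.exp (θ * hA.eigenvalues i) : ℝ) : ℂ)) *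
        star (hA.eigenvectorUnitary : Matrix (Fin d) (Fin d) ℂ) := by
  have hUU : (hA.eigenvectorUnitary : Matrix (Fin d) (Fin d) ℂ) *
      star (hA.eigenvectorUnitary : Matrix (Fin d) (Fin d) ℂ) = 1 :=
    mem_unitaryGroup_iff.mp hA.eigenvectorUnitary.2
  have h1 : (1 : Matrix (Fin d) (Fin d) ℂ) = (hA.eigenvectorUnitary : Matrix (Fin d) (Fin d) ℂ) *
      diagonal (fun _ : Fin d => ((1 : ℝ) : ℂ)) *
      star (hA.eigenvectorUnitary : Matrix (Fin d) (Fin d) ℂ) := by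
    have : diagonal (fun _ : Fin d => ((1 : ℝ) : ℂ)) = (1 : Matrix (Fin d) (Fin d) ℂ) := by
      simp [diagonal_one]
    rw [this, mul_one, hUU]
  have hA2 : (Real.exp θ - θ - 1) • A ^ 2 = (hA.eigenvectorUnitary : Matrix (Fin d) (Fin d) ℂ) *
      diagonal (fun i => (((Real.exp θ - θ - 1) * hA.eigenvalues i ^ 2 : ℝ) : ℂ)) *
      star (hA.eigenvectorUnitary : Matrix (Fin d) (Fin d) ℂ) := by
    rw [sq_spectral hA, ← smul_mul_assoc, ← mul_smul_comm]
    congr 2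
    ext i j
    rcases eq_or_ne i j with h | h <;>
      simp [h, diagonal_apply, Complex.real_smul]
  have hsplit : (diagonal (fun i => ((1 + θ * hA.eigenvalues i
      + (Real.exp θ - θ - 1) * hA.eigenvalues i ^ 2
      - Real.exp (θ * hA.eigenvalues i) : ℝ) : ℂ)) : Matrix (Fin d) (Fin d) ℂ)
      = diagonal (fun _ : Fin d => ((1 : ℝ) : ℂ))
        + diagonal (fun i => ((θ * hA.eigenvalues i : ℝ) : ℂ))
        + diagonal (fun i => (((Real.exp θ - θ - 1) * hA.eigenvalues i ^ 2 : ℝ) : ℂ))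
        - diagonal (fun i => ((Real.exp (θ * hA.eigenvalues i) : ℝ) : ℂ)) := by
    ext i j
    by_cases h : i = j
    · subst h
      simp only [Matrix.sub_apply, Matrix.add_apply, diagonal_apply_eq]
      push_cast
      ring
    · simp only [Matrix.sub_apply, Matrix.add_apply, diagonal_apply_ne _ h]
      ring
  rw [hsplit, mul_sub, mul_add, mul_add, sub_mul, add_mul, add_mul,
    ← h1, ← smul_spectral hA θ, ← hA2, ← exp_spectral hA θ]

lemma pointwise_psd (θ : ℝ) (hθ : 0 < θ) (A : Matrix (Fin d) (Fin d) ℂ)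
    (hA : A.IsHermitian) (hn : opNorm A ≤ 1) :
    ((1 : Matrix (Fin d) (Fin d) ℂ) + θ • A + (Real.exp θ - θ - 1) • A ^ 2
      - exp (θ • A)).PosSemidef := by
  rw [combine_spectral θ A hA]
  have hdiag : (diagonal (fun i => ((1 + θ * hA.eigenvalues i
      + (Real.exp θ - θ - 1) * hA.eigenvalues i ^ 2
      - Real.exp (θ * hA.eigenvalues i) : ℝ) : ℂ))).PosSemidef := by
    refine posSemidef_diagonal_iff.mpr fun i => ?_
    rw [Complex.zero_le_real]
    have habs : |hA.eigenvalues i| ≤ 1 := (eigen_abs_le hA i).trans hn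
    have := scalar_ineq hθ.le habs
    linarith
  have := hdiag.mul_mul_conjTranspose_same (hA.eigenvectorUnitary : Matrix (Fin d) (Fin d) ℂ)
  simpa [Matrix.star_eq_conjTranspose] using this

lemma exp_entry_le (θ : ℝ) (hθ : 0 ≤ θ) {A : Matrix (Fin d) (Fin d) ℂ} (hA : A.IsHermitian)
    (hn : opNorm A ≤ 1) (i j : Fin d) :
    ‖exp (θ • A) i j‖ ≤ d * Real.exp θ := by
  rw [exp_spectral hA θ]
  have hentry : ((hA.eigenvectorUnitary : Matrix (Fin d) (Fin d) ℂ) *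
      diagonal (fun i => ((Real.exp (θ * hA.eigenvalues i) : ℝ) : ℂ)) *
      star (hA.eigenvectorUnitary : Matrix (Fin d) (Fin d) ℂ)) i j
      = ∑ k, (hA.eigenvectorUnitary : Matrix (Fin d) (Fin d) ℂ) i k *
          ((Real.exp (θ * hA.eigenvalues k) : ℝ) : ℂ) *
          star ((hA.eigenvectorUnitary : Matrix (Fin d) (Fin d) ℂ) j k) := by
    rw [Matrix.mul_apply]
    refine Finset.sum_congr rfl fun k _ => ?_
    rw [Matrix.mul_diagonal, Matrix.star_eq_conjTranspose, Matrix.conjTranspose_apply]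
  rw [hentry]
  calc ‖∑ k, (hA.eigenvectorUnitary : Matrix (Fin d) (Fin d) ℂ) i k *
        ((Real.exp (θ * hA.eigenvalues k) : ℝ) : ℂ) *
        star ((hA.eigenvectorUnitary : Matrix (Fin d) (Fin d) ℂ) j k)‖
      ≤ ∑ k, ‖(hA.eigenvectorUnitary : Matrix (Fin d) (Fin d) ℂ) i k *
        ((Real.exp (θ * hA.eigenvalues k) : ℝ) : ℂ) *
        star ((hA.eigenvectorUnitary : Matrix (Fin d) (Fin d) ℂ) j k)‖ := norm_sum_le _ _
    _ ≤ ∑ _k : Fin d, Real.exp θ := by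
        refine Finset.sum_le_sum fun k _ => ?_
        rw [norm_mul, norm_mul, norm_star]
        have h1 : ‖(hA.eigenvectorUnitary : Matrix (Fin d) (Fin d) ℂ) i k‖ ≤ 1 :=
          entry_norm_bound_of_unitary hA.eigenvectorUnitary.2 i k
        have h2 : ‖(hA.eigenvectorUnitary : Matrix (Fin d) (Fin d) ℂ) j k‖ ≤ 1 :=
          entry_norm_bound_of_unitary hA.eigenvectorUnitary.2 j k
        have h3 : ‖((Real.exp (θ * hA.eigenvalues k) : ℝ) : ℂ)‖ ≤ Real.exp θ := by
          rw [Complex.norm_real, Real.norm_eq_abs, abs_of_pos (Real.exp_pos _)]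
          apply Real.exp_le_exp.2
          have habs : |hA.eigenvalues k| ≤ 1 := (eigen_abs_le hA k).trans hn
          calc θ * hA.eigenvalues k ≤ θ * 1 :=
            mul_le_mul_of_nonneg_left ((abs_le.1 habs).2) hθ
            _ = θ := mul_one θ
        calc ‖(hA.eigenvectorUnitary : Matrix (Fin d) (Fin d) ℂ) i k‖ *
              ‖((Real.exp (θ * hA.eigenvalues k) : ℝ) : ℂ)‖ *
              ‖(hA.eigenvectorUnitary : Matrix (Fin d) (Fin d) ℂ) j k‖
            ≤ 1 * Real.exp θ * 1 := by
              apply mul_le_mul (mul_le_mul h1 h3 (norm_nonneg _) zero_le_one) h2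
                (norm_nonneg _)
              positivity
          _ = Real.exp θ := by ring
    _ = d * Real.exp θ := by
        rw [Finset.sum_const, Finset.card_univ, Fintype.card_fin, nsmul_eq_mul]


lemma matrix_exp_entry_hasSum {d : ℕ} (B : Matrix (Fin d) (Fin d) ℂ) (i j : Fin d) :
    Filter.Tendsto (fun N => ∑ n ∈ Finset.range N, ((n ! : ℂ)⁻¹ • B ^ n) i j)
      Filter.atTop (nhds (exp B i j)) := by
  letI : SeminormedRing (Matrix (Fin d) (Fin d) ℂ) := Matrix.linftyOpSemiNormedRing
  letI : NormedRing (Matrix (Fin d) (Fin d) ℂ) := Matrix.linftyOpNormedRing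
  letI : NormedAlgebra ℂ (Matrix (Fin d) (Fin d) ℂ) := Matrix.linftyOpNormedAlgebra
  have h := (NormedSpace.exp_series_hasSum_exp' (𝕂 := ℂ) B).tendsto_sum_nat
  have h2 : Continuous (fun M : Matrix (Fin d) (Fin d) ℂ => M i j) :=
    (continuous_apply j).comp (continuous_apply i)
  have h3 := (h2.tendsto _).comp h
  refine h3.congr fun N => ?_
  simp [Function.comp, Matrix.sum_apply, Matrix.smul_apply, smul_eq_mul]

lemma exp_entry_measurable {d : ℕ} {Ω : Type*} [MeasurableSpace Ω]
    (X : Ω → Matrix (Fin d) (Fin d) ℂ)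
    (hmeas : ∀ i j, Measurable fun ω => X ω i j) (θ : ℝ) (i j : Fin d) :
    Measurable fun ω => exp (θ • X ω) i j := by
  have hpow : ∀ (n : ℕ) (i j : Fin d), Measurable fun ω => ((θ • X ω) ^ n) i j := by
    intro n
    induction n with
    | zero =>
      intro i j
      simp only [pow_zero]
      exact measurable_const
    | succ n ih =>
      intro i j
      simp only [pow_succ, Matrix.mul_apply]
      exact Finset.measurable_sum _ fun k _ =>
        (ih i k).mul (((hmeas k j).const_smul θ))
  apply measurable_of_tendsto_metrizable'
    (f := fun N ω => ∑ n ∈ Finset.range N, ((n ! : ℂ)⁻¹ • (θ • X ω) ^ n) i j) Filter.atTop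
  · intro N
    apply Finset.measurable_sum
    intro n _
    simp only [Matrix.smul_apply, smul_eq_mul]
    exact (hpow n i j).const_mul _
  · rw [tendsto_pi_nhds]
    intro ω
    exact matrix_exp_entry_hasSum (θ • X ω) i j

lemma hermitian_realSmul {d : ℕ} {M : Matrix (Fin d) (Fin d) ℂ} (h : M.IsHermitian) (r : ℝ) :
    (r • M).IsHermitian := by
  show (r • M)ᴴ = r • M
  rw [conjTranspose_smul, star_trivial, h.eq]

/-- MGF bound: `𝔼 e^{θX} ⪯ I + φ(θ) 𝔼X²` for a bounded centered self-adjoint random matrix. -/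
theorem mgf_loewner_bound {d : ℕ} {Ω : Type*} [MeasurableSpace Ω]
    (μ : Measure Ω) [IsProbabilityMeasure μ]
    (X : Ω → Matrix (Fin d) (Fin d) ℂ)
    (hherm : ∀ ω, (X ω).IsHermitian)
    (hmeas : ∀ i j, Measurable fun ω => X ω i j)
    (hmean : (Matrix.of fun i j => ∫ ω, X ω i j ∂μ) = 0)
    (hbound : ∀ᵐ ω ∂μ, opNorm (X ω) ≤ 1)
    (θ : ℝ) (hθ : 0 < θ) :
    ((1 : Matrix (Fin d) (Fin d) ℂ)
        + (Real.exp θ - θ - 1) • (Matrix.of fun i j => ∫ ω, (X ω ^ 2) i j ∂μ)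
        - Matrix.of fun i j => ∫ ω, (exp (θ • X ω)) i j ∂μ).PosSemidef := by
  classical
  have hXae : ∀ i j, ∀ᵐ ω ∂μ, ‖X ω i j‖ ≤ 1 :=
    fun i j => hbound.mono fun ω hω => (entry_le_opNorm (X ω) i j).trans hω
  have hX_int : ∀ i j, Integrable (fun ω => X ω i j) μ := fun i j =>
    Integrable.mono' (integrable_const 1) (hmeas i j).aestronglyMeasurable (hXae i j)
  have hX2meas : ∀ i j, Measurable fun ω => (X ω ^ 2) i j := by
    intro i j
    simp only [pow_two, Matrix.mul_apply]
    exact Finset.measurable_sum _ fun k _ => (hmeas i k).mul (hmeas k j)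
  have hX2_int : ∀ i j, Integrable (fun ω => (X ω ^ 2) i j) μ := by
    intro i j
    refine Integrable.mono' (integrable_const 1) (hX2meas i j).aestronglyMeasurable ?_
    refine hbound.mono fun ω hω => ?_
    have h0 : (0 : ℝ) ≤ opNorm (X ω) := norm_nonneg _
    calc ‖(X ω ^ 2) i j‖ ≤ opNorm (X ω ^ 2) := entry_le_opNorm _ i j
      _ ≤ opNorm (X ω) ^ 2 := opNorm_sq_le _
      _ ≤ 1 := by nlinarith
  have hexpmeas : ∀ i j, Measurable fun ω => exp (θ • X ω) i j :=
    fun i j => exp_entry_measurable X hmeas θ i j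
  have hexp_int : ∀ i j, Integrable (fun ω => exp (θ • X ω) i j) μ := by
    intro i j
    refine Integrable.mono' (integrable_const (d * Real.exp θ))
      (hexpmeas i j).aestronglyMeasurable ?_
    exact hbound.mono fun ω hω => exp_entry_le θ hθ.le (hherm ω) hω i j
  set c : ℝ := Real.exp θ - θ - 1 with hc
  set F : Ω → Matrix (Fin d) (Fin d) ℂ := fun ω =>
    (1 : Matrix (Fin d) (Fin d) ℂ) + θ • X ω + c • X ω ^ 2 - exp (θ • X ω) with hF
  have hFentry : ∀ ω i j, F ω i j
      = (1 : Matrix (Fin d) (Fin d) ℂ) i j + θ • X ω i j + c • (X ω ^ 2) i j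
        - exp (θ • X ω) i j := by
    intro ω i j
    simp [hF, Matrix.sub_apply, Matrix.add_apply, Matrix.smul_apply]
  have hF_int : ∀ i j, Integrable (fun ω => F ω i j) μ := by
    intro i j
    have : (fun ω => F ω i j) = fun ω =>
        (1 : Matrix (Fin d) (Fin d) ℂ) i j + θ • X ω i j + c • (X ω ^ 2) i j
          - exp (θ • X ω) i j := funext fun ω => hFentry ω i j
    rw [this]
    exact (((integrable_const _).add ((hX_int i j).smul θ)).add
      ((hX2_int i j).smul c)).sub (hexp_int i j)
  have htarget : ((1 : Matrix (Fin d) (Fin d) ℂ)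
        + c • (Matrix.of fun i j => ∫ ω, (X ω ^ 2) i j ∂μ)
        - Matrix.of fun i j => ∫ ω, (exp (θ • X ω)) i j ∂μ)
      = Matrix.of (fun i j => ∫ ω, F ω i j ∂μ) := by
    ext i j
    have hXzero : ∫ ω, X ω i j ∂μ = 0 := by
      have h := congrFun (congrFun hmean i) j
      simpa using h
    have hint : (fun ω => F ω i j) = fun ω =>
        (1 : Matrix (Fin d) (Fin d) ℂ) i j + θ • X ω i j + c • (X ω ^ 2) i j
          - exp (θ • X ω) i j := funext fun ω => hFentry ω i j
    simp only [Matrix.sub_apply, Matrix.add_apply, Matrix.smul_apply, Matrix.of_apply]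
    have h2 : Integrable (fun ω => θ • X ω i j) μ := (hX_int i j).smul θ
    have h3 : Integrable (fun ω => c • (X ω ^ 2) i j) μ := (hX2_int i j).smul c
    have h12 : Integrable (fun ω => (1 : Matrix (Fin d) (Fin d) ℂ) i j + θ • X ω i j) μ :=
      (integrable_const _).add h2
    have h123 : Integrable (fun ω => (1 : Matrix (Fin d) (Fin d) ℂ) i j + θ • X ω i j
        + c • (X ω ^ 2) i j) μ := h12.add h3
    rw [hint, integral_sub h123 (hexp_int i j), integral_add h12 h3,
      integral_add (integrable_const _) h2,
      integral_smul, integral_smul, hXzero, smul_zero, add_zero, integral_const]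
    simp [measure_univ]
  rw [htarget]
  have hFherm : ∀ ω, (F ω).IsHermitian := by
    intro ω
    exact ((isHermitian_one.add (hermitian_realSmul (hherm ω) θ)).add
      (hermitian_realSmul ((hherm ω).pow 2) c)).sub
      (Matrix.IsHermitian.exp (hermitian_realSmul (hherm ω) θ))
  have hFpsd : ∀ᵐ ω ∂μ, (F ω).PosSemidef :=
    hbound.mono fun ω hω => pointwise_psd θ hθ (X ω) (hherm ω) hω
  refine posSemidef_iff_dotProduct_mulVec.mpr ⟨?_, fun x => ?_⟩
  · show (Matrix.of fun i j => ∫ ω, F ω i j ∂μ)ᴴ = _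
    ext i j
    rw [conjTranspose_apply, Matrix.of_apply, Matrix.of_apply]
    have : star (∫ ω, F ω j i ∂μ) = ∫ ω, (starRingEnd ℂ) (F ω j i) ∂μ := by
      rw [integral_conj]; rfl
    rw [this]
    congr 1
    funext ω
    have := (hFherm ω).eq
    calc (starRingEnd ℂ) (F ω j i) = (F ω)ᴴ i j := by rw [conjTranspose_apply]; rfl
      _ = F ω i j := by rw [this]
  · have hrw : ∀ M : Matrix (Fin d) (Fin d) ℂ, star x ⬝ᵥ (M *ᵥ x)
        = ∑ i, ∑ j, (star (x i) * x j) * M i j := by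
      intro M
      simp only [dotProduct, Matrix.mulVec, dotProduct, Pi.star_apply, Finset.mul_sum]
      exact Finset.sum_congr rfl fun i _ => Finset.sum_congr rfl fun j _ => by ring
    have hquad : star x ⬝ᵥ ((Matrix.of fun i j => ∫ ω, F ω i j ∂μ) *ᵥ x)
        = ∫ ω, star x ⬝ᵥ (F ω *ᵥ x) ∂μ := by
      rw [hrw]
      have hstep1 : ∀ i j, (star (x i) * x j) * ∫ ω, F ω i j ∂μ
          = ∫ ω, (star (x i) * x j) * F ω i j ∂μ := by
        intro i j
        rw [← smul_eq_mul, ← integral_smul]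
        simp [smul_eq_mul]
      calc ∑ i, ∑ j, (star (x i) * x j) * (Matrix.of fun i j => ∫ ω, F ω i j ∂μ) i j
          = ∑ i, ∑ j, ∫ ω, (star (x i) * x j) * F ω i j ∂μ := by
            refine Finset.sum_congr rfl fun i _ => Finset.sum_congr rfl fun j _ => ?_
            rw [Matrix.of_apply, hstep1]
        _ = ∫ ω, ∑ i, ∑ j, (star (x i) * x j) * F ω i j ∂μ := by
            rw [integral_finset_sum]
            · exact Finset.sum_congr rfl fun i _ =>
                (integral_finset_sum _ fun j _ => (hF_int i j).const_mul _).symm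
            · exact fun i _ => integrable_finset_sum _ fun j _ => (hF_int i j).const_mul _
        _ = ∫ ω, star x ⬝ᵥ (F ω *ᵥ x) ∂μ := by
            congr 1
            funext ω
            rw [hrw]
    rw [hquad]
    have hg_nonneg : ∀ᵐ ω ∂μ, 0 ≤ star x ⬝ᵥ (F ω *ᵥ x) := hFpsd.mono fun ω h => h.dotProduct_mulVec_nonneg x
    have him : ∀ᵐ ω ∂μ, star x ⬝ᵥ (F ω *ᵥ x)
        = (((star x ⬝ᵥ (F ω *ᵥ x)).re : ℝ) : ℂ) := by
      refine hg_nonneg.mono fun ω h => ?_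
      have h2 := (Complex.le_def.mp h).2
      apply Complex.ext
      · simp
      · simp [← h2]
    rw [integral_congr_ae him]
    have hre : ∫ ω, (((star x ⬝ᵥ (F ω *ᵥ x)).re : ℝ) : ℂ) ∂μ
        = ((∫ ω, (star x ⬝ᵥ (F ω *ᵥ x)).re ∂μ : ℝ) : ℂ) := integral_ofReal
    rw [hre, Complex.zero_le_real]
    apply integral_nonneg_of_ae
    refine hg_nonneg.mono fun ω h => ?_
    have h1 := (Complex.le_def.mp h).1
    simpa using h1
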